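/- Let 𝔥 be a finite-dimensional real Lie algebra, let 𝔯 denote its radical (the largest solvable ideal of 𝔥), and let 𝔩 be a Lie subalgebra of 𝔥 which is semisimple and satisfies 𝔥 = 𝔩 ⊕ 𝔯 as vector spaces (i.e. 𝔩 ∩ 𝔯 = 0 and 𝔩 + 𝔯 = 𝔥). If 𝔫 is a Lie ideal of 𝔥 such that 𝔫 + 𝔯 = 𝔥, then 𝔩 ⊆ 𝔫. -/

import Mathlib

open LieAlgebra

lemma perfect_of_isSemisimple {K : Type*} [LieRing K] [LieAlgebra ℝ K]
    [LieAlgebra.IsSemisimple ℝ K] :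
    ⁅(⊤ : LieIdeal ℝ K), (⊤ : LieIdeal ℝ K)⁆ = ⊤ := by
  rw [eq_top_iff]
  refine le_trans (le_of_eq (IsSemisimple.sSup_atoms_eq_top (R := ℝ) (L := K)).symm)
    (sSup_le ?_)
  intro J hJ
  have h2 : ⁅J, J⁆ ≠ ⊥ := by
    intro h
    exact IsSemisimple.non_abelian_of_isAtom J hJ
      ((abelian_iff_derived_one_eq_bot J).mpr (by simpa using h))
  have := hJ.le_iff.mp (LieSubmodule.lie_le_left J J)
  rcases this with h | h
  · exact absurd h h2
  · calc J = ⁅J, J⁆ := h.symm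
      _ ≤ ⁅⊤, ⊤⁆ := LieSubmodule.mono_lie le_top le_top

lemma perfect_derivedSeries {K : Type*} [LieRing K] [LieAlgebra ℝ K]
    [LieAlgebra.IsSemisimple ℝ K] (k : ℕ) :
    derivedSeries ℝ K k = ⊤ := by
  induction k with
  | zero => rfl
  | succ k ih =>
    rw [derivedSeries_def, derivedSeriesOfIdeal_succ, ← derivedSeries_def, ih,
      perfect_of_isSemisimple]

theorem levi_subalgebra_le_ideal_of_sup_radical_eq_top
    {L : Type*} [LieRing L] [LieAlgebra ℝ L] [Module.Finite ℝ L]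
    (𝔩 : LieSubalgebra ℝ L) [LieAlgebra.IsSemisimple ℝ 𝔩]
    (hinf : 𝔩.toSubmodule ⊓ (LieAlgebra.radical ℝ L).toSubmodule = ⊥)
    (hsup : 𝔩.toSubmodule ⊔ (LieAlgebra.radical ℝ L).toSubmodule = ⊤)
    (𝔫 : LieIdeal ℝ L)
    (hn : 𝔫.toSubmodule ⊔ (LieAlgebra.radical ℝ L).toSubmodule = ⊤) :
    𝔩.toSubmodule ≤ 𝔫.toSubmodule := by
  -- radical is solvable
  obtain ⟨m, hm⟩ := IsSolvable.solvable ℝ (radical ℝ L)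
  rw [LieIdeal.derivedSeries_eq_bot_iff] at hm
  have htop : 𝔫 ⊔ radical ℝ L = ⊤ := by
    apply (LieSubmodule.toSubmodule_inj _ _).mp
    rw [LieSubmodule.sup_toSubmodule]
    simpa using hn
  have key : derivedSeries ℝ L m ≤ 𝔫 := by
    have := derivedSeriesOfIdeal_add_le_add (R := ℝ) (L := L) (I := 𝔫)
      (radical ℝ L) 0 m
    rw [derivedSeriesOfIdeal_zero, hm] at this
    calc derivedSeries ℝ L m = derivedSeriesOfIdeal ℝ L (0 + m) (𝔫 + radical ℝ L) := by
          rw [zero_add, derivedSeries_def]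
          congr 1
          exact htop.symm
      _ ≤ 𝔫 + ⊥ := this
      _ = 𝔫 := by simp
  intro x hx
  have hmem : x ∈ derivedSeries ℝ L m := by
    have hmap := LieIdeal.derivedSeries_map_le (f := 𝔩.incl) m
    rw [perfect_derivedSeries] at hmap
    exact hmap (LieIdeal.mem_map (f := 𝔩.incl) (LieSubmodule.mem_top (⟨x, hx⟩ : 𝔩)))
  exact key hmem
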